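/- arXiv:1706.01908 — 3 statements merged into one kernel-verified Lean document; each statement's English description precedes it below -/
import Mathlib

section
/- Let X be a type and consider the cosimplicial set coTHH_×^•(X) (the cyclic cobar construction of X with respect to the cartesian product, where comultiplication is the diagonal). For every n ≥ 2, the matching map σ : coTHH_×^n(X) = X^{n+1} → M_n(coTHH_×^•(X)), given by y ↦ (σ_0(y), …, σ_{n-1}(y)), is a bijection. -/
/-!
The cyclic cobar construction `coTHH_×^•(X)` of a type `X` with respect to the cartesian
product has `m`-th level `Fin (m+1) → X`, and its codegeneracy
`σ_i : X^{m+2} → X^{m+1}` (for `0 ≤ i ≤ m`) deletes the `(i+1)`-st coordinate.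
-/

/-- The codegeneracy `σ_i` of `coTHH_×^•(X)` from level `n+1` to level `n`:
it deletes the `(i+1)`-st coordinate (coordinates being indexed by `0, …, n+2`). -/
def coTHHtimesCodegen (X : Type*) (n : ℕ) (i : Fin (n + 1)) (y : Fin (n + 2) → X) :
    Fin (n + 1) → X :=
  fun j => y (Fin.succAbove i.succ j)

private lemma sa_val {m : ℕ} (p : Fin (m+1)) (j : Fin m) :
    ((p.succAbove j : Fin (m+1)) : ℕ) = if (j:ℕ) < (p:ℕ) then (j:ℕ) else (j:ℕ)+1 := by
  rcases lt_or_ge (Fin.castSucc j) p with h | h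
  · rw [Fin.succAbove_of_castSucc_lt _ _ h]
    have h' : (j:ℕ) < (p:ℕ) := h
    simp [h']
  · rw [Fin.succAbove_of_le_castSucc _ _ h]
    have h' : (p:ℕ) ≤ (j:ℕ) := h
    rw [if_neg (by omega)]
    simp


/-- For `n ≥ 2` (written here as `n + 2`), the matching map
`σ : coTHH_×^{n+2}(X) = X^{n+3} → M_{n+2}(coTHH_×^•(X))`, `y ↦ (σ_0 y, …, σ_{n+1} y)`,
is a bijection: it is injective and its range is exactly the matching set
`{(x_0,…,x_{n+1}) : σ_i (x_j) = σ_{j-1} (x_i) for i < j}` (the condition being written below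
with `j = j'+1`, i.e. `σ_i (x_{j'+1}) = σ_{j'} (x_i)` for `i ≤ j'`). -/

theorem coTHHtimes_matching_bijective (X : Type*) (n : ℕ) :
    Function.Injective
        (fun (y : Fin (n + 3) → X) => fun i : Fin (n + 2) => coTHHtimesCodegen X (n + 1) i y) ∧
      Set.range
          (fun (y : Fin (n + 3) → X) => fun i : Fin (n + 2) => coTHHtimesCodegen X (n + 1) i y) =
        {x : Fin (n + 2) → Fin (n + 2) → X |
          ∀ i j : Fin (n + 1), i ≤ j →
            coTHHtimesCodegen X n i (x j.succ) = coTHHtimesCodegen X n j (x i.castSucc)} := by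
  constructor
  · -- Injectivity
    intro y y' h
    have h' : ∀ i j : Fin (n+2), y (Fin.succAbove i.succ j) = y' (Fin.succAbove i.succ j) :=
      fun i j => congrFun (congrFun h i) j
    funext k
    have hkL : (k:ℕ) < n + 3 := k.isLt
    by_cases hk : (k:ℕ) = 1
    · have e : Fin.succAbove ((⟨1, by omega⟩ : Fin (n+2)).succ) (⟨1, by omega⟩ : Fin (n+2)) = k := by
        apply Fin.ext
        rw [sa_val]
        show (if (1:ℕ) < 1 + 1 then (1:ℕ) else 1 + 1) = (k:ℕ)
        rw [if_pos (by omega)]; omega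
      rw [← e]; exact h' _ _
    · have e : Fin.succAbove ((⟨0, by omega⟩ : Fin (n+2)).succ)
          (⟨(k:ℕ) - 1, by omega⟩ : Fin (n+2)) = k := by
        apply Fin.ext
        rw [sa_val]
        show (if (k:ℕ) - 1 < 0 + 1 then (k:ℕ) - 1 else (k:ℕ) - 1 + 1) = (k:ℕ)
        split_ifs <;> omega
      rw [← e]; exact h' _ _
  · -- Range
    apply Set.eq_of_subset_of_subset
    · rintro x ⟨y, rfl⟩
      intro i j hij
      have hij' : (i:ℕ) ≤ (j:ℕ) := hij
      funext c
      simp only [coTHHtimesCodegen]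
      congr 1
      apply Fin.ext
      simp only [sa_val, Fin.val_succ, Fin.coe_castSucc]
      split_ifs <;> omega
    · intro x hx
      simp only [Set.mem_setOf_eq] at hx
      have hx' : ∀ a b c d e : ℕ, ∀ (hab : a ≤ b) (hb : b < n + 1) (hc : c < n + 1)
          (hd : d < n + 2) (he : e < n + 2)
          (hd1 : c < a + 1 → d = c) (hd2 : a + 1 ≤ c → d = c + 1)
          (he1 : c < b + 1 → e = c) (he2 : b + 1 ≤ c → e = c + 1),
          x ⟨b + 1, by omega⟩ ⟨d, hd⟩ = x ⟨a, by omega⟩ ⟨e, he⟩ := by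
        intro a b c d e hab hb hc hd he hd1 hd2 he1 he2
        have H := congrFun (hx ⟨a, by omega⟩ ⟨b, hb⟩ (Fin.mk_le_mk.mpr hab)) ⟨c, hc⟩
        simp only [coTHHtimesCodegen] at H
        have e1 : Fin.succAbove ((⟨a, by omega⟩ : Fin (n+1)).succ) (⟨c, hc⟩ : Fin (n+1)) =
            (⟨d, hd⟩ : Fin (n+2)) := by
          apply Fin.ext
          rw [sa_val]
          show (if c < a + 1 then c else c + 1) = d
          split_ifs <;> omega
        have e2 : Fin.succAbove ((⟨b, hb⟩ : Fin (n+1)).succ) (⟨c, hc⟩ : Fin (n+1)) =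
            (⟨e, he⟩ : Fin (n+2)) := by
          apply Fin.ext
          rw [sa_val]
          show (if c < b + 1 then c else c + 1) = e
          split_ifs <;> omega
        rw [e1, e2] at H
        exact H
      refine ⟨fun k => if (k:ℕ) = 1 then x ⟨1, by omega⟩ ⟨1, by omega⟩
        else x ⟨0, by omega⟩ ⟨(k:ℕ) - 1, by have := k.isLt; omega⟩, ?_⟩
      funext i j
      simp only [coTHHtimesCodegen]
      have hiL : (i:ℕ) < n + 2 := i.isLt
      have hjL : (j:ℕ) < n + 2 := j.isLt
      have htd : ((Fin.succAbove i.succ j).val = j.val ∧ j.val < i.val + 1) ∨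
          ((Fin.succAbove i.succ j).val = j.val + 1 ∧ i.val + 1 ≤ j.val) := by
        have hval := sa_val i.succ j
        rw [Fin.val_succ] at hval
        rcases Nat.lt_or_ge j.val (i.val + 1) with h | h
        · exact Or.inl ⟨by rw [hval, if_pos h], h⟩
        · exact Or.inr ⟨by rw [hval, if_neg (by omega)], h⟩
      by_cases h1 : ((Fin.succAbove i.succ j : Fin (n+3)) : ℕ) = 1
      · rw [if_pos h1]
        obtain ⟨hj1, hi1⟩ : (j:ℕ) = 1 ∧ 1 ≤ (i:ℕ) := by omega
        rcases Nat.lt_or_ge (i:ℕ) 2 with hi2 | hi2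
        · exact congr (congrArg x (by apply Fin.ext; show (1:ℕ) = (i:ℕ); omega))
            (by apply Fin.ext; show (1:ℕ) = (j:ℕ); omega)
        · have H := hx' 1 ((i:ℕ) - 1) 1 1 1 (by omega) (by omega) (by omega)
            (by omega) (by omega) (by omega) (by omega) (by omega) (by omega)
          exact H.symm.trans (congr
            (congrArg x (by apply Fin.ext; show (i:ℕ) - 1 + 1 = (i:ℕ); omega))
            (by apply Fin.ext; show (1:ℕ) = (j:ℕ); omega))
      · rw [if_neg h1]
        rcases Nat.eq_zero_or_pos (i:ℕ) with hi0 | hi0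
        · exact congr (congrArg x (by apply Fin.ext; show (0:ℕ) = (i:ℕ); omega))
            (by apply Fin.ext;
                show ((Fin.succAbove i.succ j : Fin (n+3)) : ℕ) - 1 = (j:ℕ); omega)
        · have hj1 : (j:ℕ) ≠ 1 := by omega
          have H := hx' 0 ((i:ℕ) - 1) ((j:ℕ) - 1) (j:ℕ)
            (((Fin.succAbove i.succ j : Fin (n+3)) : ℕ) - 1)
            (by omega) (by omega) (by omega) (by omega)
            (by have := (Fin.succAbove i.succ j).isLt; omega)
            (by omega) (by omega) (by omega) (by omega)
          exact H.symm.trans (congr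
            (congrArg x (by apply Fin.ext; show (i:ℕ) - 1 + 1 = (i:ℕ); omega))
            (Fin.ext rfl))
end

section
/- Let k be a commutative ring and (C, Δ, ε) a counital coassociative k-coalgebra admitting a k-linear map η : k → C with ε ∘ η = id_k. Then for every n ≥ 0 the matching map σ : coTHH^n(C) = C^{⊗(n+1)} → M_n(coTHH^•(C)), y ↦ (σ_0(y),…,σ_{n-1}(y)), is surjective. -/
open scoped TensorProduct

noncomputable section

namespace CoTHH

set_option linter.unusedSectionVars false

variable {k : Type*} [CommRing k] {C : Type*} [AddCommGroup C] [Module k C]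

private lemma update_succAbove_self {n : ℕ} [DecidableEq (Fin (n + 1))] (c : Fin (n + 1) → C) (p : Fin (n + 1)) (v : C) :
    (fun j => Function.update c p v (p.succAbove j)) = fun j => c (p.succAbove j) := by
  funext j
  exact Function.update_of_ne (Fin.succAbove_ne p j) _ _

private lemma update_succAbove_other {n : ℕ} [DecidableEq (Fin (n + 1))] [DecidableEq (Fin n)] (c : Fin (n + 1) → C) (p : Fin (n + 1))
    (j₀ : Fin n) (v : C) :
    (fun j => Function.update c (p.succAbove j₀) v (p.succAbove j)) =
      Function.update (fun j => c (p.succAbove j)) j₀ v := by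
  funext j
  rcases eq_or_ne j j₀ with rfl | hj
  · simp
  · rw [Function.update_of_ne (Fin.succAbove_right_injective.ne hj),
      Function.update_of_ne hj]

/-- The codegeneracy-type operator on tensor powers: given a linear functional
`ε : C → k`, the map `id^{⊗p} ⊗ ε ⊗ id^{⊗(n-p)} : C^{⊗(n+1)} → C^{⊗n}` applying `ε`
in the `p`-th tensor factor (and deleting that factor). -/
def epsAt (ε : C →ₗ[k] k) (n : ℕ) (p : Fin (n + 1)) :
    (⨂[k] (_ : Fin (n + 1)), C) →ₗ[k] ⨂[k] (_ : Fin n), C :=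
  PiTensorProduct.lift
    { toFun := fun c => ε (c p) • PiTensorProduct.tprod k (fun j => c (p.succAbove j))
      map_update_add' := by
        intro _ c m x y
        try dsimp only
        rcases eq_or_ne m p with rfl | hmp
        · rw [update_succAbove_self, update_succAbove_self, update_succAbove_self]
          simp [add_smul]
        · obtain ⟨j₀, rfl⟩ := Fin.exists_succAbove_eq hmp
          rw [update_succAbove_other, update_succAbove_other, update_succAbove_other]
          simp only [Function.update_of_ne (Fin.ne_succAbove p j₀)]
          rw [MultilinearMap.map_update_add, smul_add]
      map_update_smul' := by
        intro _ c m s x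
        try dsimp only
        rcases eq_or_ne m p with rfl | hmp
        · rw [update_succAbove_self, update_succAbove_self]
          simp [mul_smul]
        · obtain ⟨j₀, rfl⟩ := Fin.exists_succAbove_eq hmp
          rw [update_succAbove_other, update_succAbove_other]
          simp only [Function.update_of_ne (Fin.ne_succAbove p j₀)]
          rw [MultilinearMap.map_update_smul, smul_comm] }

/-- The codegeneracy operators with uniform indexing: `epsAt' ε n p : C^{⊗n} → C^{⊗(n-1)}`
applies `ε` in the `p`-th factor.  In particular `σ_i : C^{⊗(m+2)} → C^{⊗(m+1)}`
(the `i`-th codegeneracy `id^{⊗(i+1)} ⊗ ε ⊗ id^{⊗(m-i)}` of `coTHH^•(C)` at level `m+1`)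
is `epsAt' ε (m+2) (i+1)`. -/
def epsAt' (ε : C →ₗ[k] k) : ∀ (n : ℕ), Fin n → ((⨂[k] (_ : Fin n), C) →ₗ[k] ⨂[k] (_ : Fin (n - 1)), C)
  | n + 1, p => epsAt ε n p

private lemma val_succAbove'' {m : ℕ} (p : Fin (m + 1)) (i : Fin m) :
    ((p.succAbove i : Fin (m + 1)) : ℕ) = if (i : ℕ) < (p : ℕ) then (i : ℕ) else (i : ℕ) + 1 := by
  rcases Nat.lt_or_ge (i : ℕ) (p : ℕ) with h | h
  · rw [Fin.succAbove_of_castSucc_lt _ _ (by simpa [Fin.lt_def] using h)]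
    simp [h]
  · rw [Fin.succAbove_of_le_castSucc _ _ (by simpa [Fin.le_def] using h)]
    simp [Nat.not_lt.2 h]

private lemma succAbove_succAbove_key {m : ℕ} (p q : Fin (m + 2)) (p₁ q₁ : Fin (m + 1))
    (hp : q.succAbove p₁ = p) (hq : p.succAbove q₁ = q) (j : Fin m) :
    p.succAbove (q₁.succAbove j) = q.succAbove (p₁.succAbove j) := by
  have h1 := congrArg Fin.val hp
  have h2 := congrArg Fin.val hq
  rw [val_succAbove''] at h1 h2
  apply Fin.ext
  rw [val_succAbove'', val_succAbove'', val_succAbove'', val_succAbove'']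
  split_ifs at h1 h2 ⊢ <;> omega

private lemma insertNth_update' {n : ℕ} [DecidableEq (Fin n)] [DecidableEq (Fin (n + 1))]
    (p : Fin (n + 1)) (v : C) (c : Fin n → C) (j : Fin n) (x : C) :
    Fin.insertNth (α := fun _ => C) p v (Function.update c j x) =
      Function.update (Fin.insertNth (α := fun _ => C) p v c) (p.succAbove j) x := by
  funext i
  rcases eq_or_ne i p with rfl | hip
  · rw [Fin.insertNth_apply_same,
      Function.update_of_ne (Fin.succAbove_ne _ j).symm, Fin.insertNth_apply_same]
  · obtain ⟨i', rfl⟩ := Fin.exists_succAbove_eq hip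
    rw [Fin.insertNth_apply_succAbove]
    rcases eq_or_ne i' j with rfl | hij
    · simp
    · rw [Function.update_of_ne hij,
        Function.update_of_ne (Fin.succAbove_right_injective.ne hij),
        Fin.insertNth_apply_succAbove]

/-- Insertion of a fixed vector `v` in the `p`-th slot: `C^{⊗n} → C^{⊗(n+1)}`. -/
def ins (v : C) (n : ℕ) (p : Fin (n + 1)) :
    (⨂[k] (_ : Fin n), C) →ₗ[k] ⨂[k] (_ : Fin (n + 1)), C :=
  PiTensorProduct.lift
    { toFun := fun c => PiTensorProduct.tprod k (Fin.insertNth (α := fun _ => C) p v c)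
      map_update_add' := by
        intro _ c j x y
        rw [insertNth_update', insertNth_update', insertNth_update',
          MultilinearMap.map_update_add]
      map_update_smul' := by
        intro _ c j s x
        rw [insertNth_update', insertNth_update', MultilinearMap.map_update_smul] }

lemma epsAt_tprod (ε : C →ₗ[k] k) (n : ℕ) (p : Fin (n + 1)) (c : Fin (n + 1) → C) :
    epsAt ε n p (PiTensorProduct.tprod k c) =
      ε (c p) • PiTensorProduct.tprod k (fun j => c (p.succAbove j)) := by
  simp [epsAt]

lemma ins_tprod (v : C) (n : ℕ) (p : Fin (n + 1)) (c : Fin n → C) :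
    ins (k := k) v n p (PiTensorProduct.tprod k c) =
      PiTensorProduct.tprod k (Fin.insertNth (α := fun _ => C) p v c) := by
  simp [ins]

lemma eps_ins_same (ε : C →ₗ[k] k) (v : C) (n : ℕ) (p : Fin (n + 1))
    (z : ⨂[k] (_ : Fin n), C) :
    epsAt ε n p (ins v n p z) = ε v • z := by
  have : epsAt ε n p ∘ₗ ins (k := k) v n p = ε v • LinearMap.id := by
    apply PiTensorProduct.ext
    apply MultilinearMap.ext
    intro c
    have hc : (fun j => Fin.insertNth (α := fun _ => C) p v c (p.succAbove j)) = c :=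
      funext fun j => by simp
    simp [ins_tprod, epsAt_tprod, Fin.insertNth_apply_same, hc]
  simpa using LinearMap.congr_fun this z

lemma eps_ins_ne (ε : C →ₗ[k] k) (v : C) (n : ℕ) (p q : Fin (n + 2)) (p₁ q₁ : Fin (n + 1))
    (hp : q.succAbove p₁ = p) (hq : p.succAbove q₁ = q) (z : ⨂[k] (_ : Fin (n + 1)), C) :
    epsAt ε (n + 1) p (ins v (n + 1) q z) = ins v n q₁ (epsAt ε n p₁ z) := by
  have : epsAt ε (n + 1) p ∘ₗ ins (k := k) v (n + 1) q =
      ins v n q₁ ∘ₗ epsAt ε n p₁ := by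
    apply PiTensorProduct.ext
    apply MultilinearMap.ext
    intro c
    have hval : Fin.insertNth (α := fun _ => C) q v c p = c p₁ := by
      rw [← hp, Fin.insertNth_apply_succAbove]
    have hfun : (fun j => Fin.insertNth (α := fun _ => C) q v c (p.succAbove j)) =
        Fin.insertNth (α := fun _ => C) q₁ v (fun j => c (p₁.succAbove j)) := by
      funext j
      rcases eq_or_ne j q₁ with rfl | hj
      · rw [hq, Fin.insertNth_apply_same, Fin.insertNth_apply_same]
      · obtain ⟨j', rfl⟩ := Fin.exists_succAbove_eq hj
        rw [Fin.insertNth_apply_succAbove,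
          succAbove_succAbove_key p q p₁ q₁ hp hq, Fin.insertNth_apply_succAbove]
    simp [ins_tprod, epsAt_tprod, hval, hfun]
  exact LinearMap.congr_fun this z

lemma eps_eps (ε : C →ₗ[k] k) (n : ℕ) (p q : Fin (n + 2)) (p₁ q₁ : Fin (n + 1))
    (hp : q.succAbove p₁ = p) (hq : p.succAbove q₁ = q) (z : ⨂[k] (_ : Fin (n + 2)), C) :
    epsAt ε n p₁ (epsAt ε (n + 1) q z) = epsAt ε n q₁ (epsAt ε (n + 1) p z) := by
  have : epsAt (k := k) ε n p₁ ∘ₗ epsAt ε (n + 1) q =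
      epsAt ε n q₁ ∘ₗ epsAt ε (n + 1) p := by
    apply PiTensorProduct.ext
    apply MultilinearMap.ext
    intro c
    have hfun : (fun j => c (q.succAbove (p₁.succAbove j))) =
        fun j => c (p.succAbove (q₁.succAbove j)) :=
      funext fun j => by rw [succAbove_succAbove_key p q p₁ q₁ hp hq]
    simp only [LinearMap.compMultilinearMap_apply, LinearMap.coe_comp, Function.comp_apply,
      epsAt_tprod, map_smul, hfun]
    rw [hp, hq, smul_comm]
  exact LinearMap.congr_fun this z

end CoTHH

open CoTHH

/-- Let `k` be a commutative ring and `(C, Δ, ε)` a counital coassociative `k`-coalgebra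
admitting a `k`-linear map `η : k → C` with `ε ∘ η = id`.  Then for every `n ≥ 0` the matching
map `σ : coTHH^n(C) = C^{⊗(n+1)} → M_n(coTHH^•(C))`, `y ↦ (σ_0 y, …, σ_{n-1} y)`, is
surjective: every family `(x_0, …, x_{n-1})` in the matching object (i.e. satisfying
`σ_i (x_j) = σ_{j-1} (x_i)` for `0 ≤ i < j ≤ n-1`; note that `σ_i` and `σ_{j-1}` apply the
counit in the `(i+1)`-st resp. `j`-th tensor factor) is of the form `(σ_0 y, …, σ_{n-1} y)`. -/
theorem coTHH_matching_surjective (k : Type*) [CommRing k] (C : Type*) [AddCommGroup C]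
    [Module k C] (Δ : C →ₗ[k] C ⊗[k] C) (ε : C →ₗ[k] k)
    (hcoassoc : (TensorProduct.assoc k C C C).toLinearMap ∘ₗ
        TensorProduct.map Δ LinearMap.id ∘ₗ Δ = TensorProduct.map LinearMap.id Δ ∘ₗ Δ)
    (hcounit_l : (TensorProduct.lid k C).toLinearMap ∘ₗ
        TensorProduct.map ε LinearMap.id ∘ₗ Δ = LinearMap.id)
    (hcounit_r : (TensorProduct.rid k C).toLinearMap ∘ₗ
        TensorProduct.map LinearMap.id ε ∘ₗ Δ = LinearMap.id)
    (η : k →ₗ[k] C) (hη : ε ∘ₗ η = LinearMap.id)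
    (n : ℕ) (x : Fin n → ⨂[k] (_ : Fin n), C)
    (hx : ∀ i j : Fin n, (h : (i : ℕ) < (j : ℕ)) →
      epsAt' ε n ⟨(i : ℕ) + 1, by omega⟩ (x j) = epsAt' ε n j (x i)) :
    ∃ y : ⨂[k] (_ : Fin (n + 1)), C, ∀ i : Fin n, epsAt ε n i.succ y = x i := by
  classical
  cases n with
  | zero => exact ⟨0, fun i => i.elim0⟩
  | succ m =>
    have hη1 : ε (η 1) = (1 : k) := by
      simpa using LinearMap.congr_fun hη 1
    have claim : ∀ r : ℕ, r ≤ m + 1 → ∃ y : ⨂[k] (_ : Fin (m + 2)), C,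
        ∀ i : Fin (m + 1), (i : ℕ) < r → epsAt ε (m + 1) i.succ y = x i := by
      intro r
      induction r with
      | zero => exact fun _ => ⟨0, fun i h => absurd h (Nat.not_lt_zero _)⟩
      | succ r ih =>
        intro hr
        obtain ⟨y, hy⟩ := ih (by omega)
        have hrm : r < m + 1 := by omega
        set q : Fin (m + 2) := ⟨r + 1, by omega⟩ with hq_def
        set w : ⨂[k] (_ : Fin (m + 1)), C := x ⟨r, hrm⟩ - epsAt ε (m + 1) q y with hw_def
        refine ⟨y + ins (η 1) (m + 1) q w, ?_⟩
        intro i hi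
        rcases Nat.lt_or_ge (i : ℕ) r with hir | hir
        · -- case i < r : the new correction term does not disturb position i+1
          have him : (i : ℕ) + 1 < m + 1 := by omega
          set p : Fin (m + 2) := i.succ with hp_def
          set p₁ : Fin (m + 1) := ⟨(i : ℕ) + 1, him⟩ with hp1_def
          set q₁ : Fin (m + 1) := ⟨r, hrm⟩ with hq1_def
          have hp : q.succAbove p₁ = p := by
            apply Fin.ext
            rw [val_succAbove'']
            simp only [hp_def, hp1_def, hq_def, Fin.val_succ]
            rw [if_pos (by omega)]
          have hq : p.succAbove q₁ = q := by
            apply Fin.ext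
            rw [val_succAbove'']
            simp only [hp_def, hq1_def, hq_def, Fin.val_succ]
            rw [if_neg (by omega)]
          have hw0 : epsAt ε m p₁ w = 0 := by
            have h1 : epsAt ε m p₁ (x ⟨r, hrm⟩) = epsAt ε m q₁ (x i) := by
              have := hx i ⟨r, hrm⟩ hir
              exact this
            have h2 : epsAt ε m p₁ (epsAt ε (m + 1) q y) = epsAt ε m q₁ (x i) := by
              rw [eps_eps ε m p q p₁ q₁ hp hq, hp_def, hy i hir]
            rw [hw_def, map_sub, h1, h2, sub_self]
          rw [map_add, hy i hir, eps_ins_ne ε (η 1) m p q p₁ q₁ hp hq, hw0, map_zero,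
            add_zero]
        · -- case i = r
          have hiq : i.succ = q := by
            apply Fin.ext
            simp only [Fin.val_succ, hq_def]
            omega
          have hxr : x ⟨r, hrm⟩ = x i := by
            congr 1
            apply Fin.ext
            simp only
            omega
          rw [map_add, hiq, eps_ins_same, hη1, one_smul, hw_def, hxr]
          abel
    obtain ⟨y, hy⟩ := claim (m + 1) le_rfl
    exact ⟨y, fun i => hy i i.isLt⟩
end
end

section
/- Let k be a field, let G and H be groups, let V be a k-linear representation of G and W a k-linear representation of H. Then the canonical k-linear map V^G ⊗_k W^H → (V ⊗_k W)^{G×H}, induced by the inclusions of the invariant subspaces V^G ⊆ V and W^H ⊆ W (where G×H acts on V ⊗_k W by (g,h)·(v⊗w) = (g·v)⊗(h·w)), is an isomorphism. -/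
open scoped TensorProduct
open LinearMap

section Aux

variable {k : Type*} [Field k] {V W : Type*} [AddCommGroup V] [Module k V]
  [AddCommGroup W] [Module k W]

noncomputable def auxEquiv (k : Type*) [Field k] (V W : Type*) [AddCommGroup V] [Module k V]
    [AddCommGroup W] [Module k W] :
    V ⊗[k] W ≃ₗ[k] ((Module.Basis.ofVectorSpaceIndex k W) →₀ V) :=
  letI := Classical.decEq (Module.Basis.ofVectorSpaceIndex k W)
  (LinearEquiv.lTensor V (Module.Basis.ofVectorSpace k W).repr).trans
    (TensorProduct.finsuppScalarRight k k V _)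

lemma auxEquiv_rTensor {V' : Type*} [AddCommGroup V'] [Module k V'] (f : V' →ₗ[k] V)
    (z : V' ⊗[k] W) :
    auxEquiv k V W (f.rTensor W z) = Finsupp.mapRange.linearMap f (auxEquiv k V' W z) := by
  induction z using TensorProduct.induction_on with
  | zero => simp
  | tmul v w =>
      simp only [auxEquiv, rTensor_tmul, LinearEquiv.trans_apply, LinearEquiv.lTensor_tmul]
      ext i
      simp [TensorProduct.finsuppScalarRight_apply_tmul_apply]
  | add a b ha hb => simp only [map_add, ha, hb]

lemma auxEquiv_symm_single (i : Module.Basis.ofVectorSpaceIndex k W) (v : V) :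
    (auxEquiv k V W).symm (Finsupp.single i v) = v ⊗ₜ[k] (Module.Basis.ofVectorSpace k W i) := by
  simp only [auxEquiv, LinearEquiv.trans_symm, LinearEquiv.trans_apply,
    TensorProduct.finsuppScalarRight_symm_apply_single]
  simp [LinearEquiv.lTensor, TensorProduct.congr_symm_tmul]

lemma mem_range_rTensor {G : Type*} [Group G] (ρ : Representation k G V) (x : V ⊗[k] W)
    (hx : ∀ g, (ρ g).rTensor W x = x) :
    x ∈ LinearMap.range (ρ.invariants.subtype.rTensor W) := by
  set e := auxEquiv k V W with he
  have hinv : ∀ i, e x i ∈ ρ.invariants := by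
    intro i g
    conv_rhs => rw [← hx g, he, auxEquiv_rTensor]
    simp [he]
  have hxe : x = (e x).sum fun i v => v ⊗ₜ[k] (Module.Basis.ofVectorSpace k W i) := by
    conv_lhs => rw [← e.symm_apply_apply x, ← Finsupp.sum_single (e x)]
    rw [map_finsuppSum]
    exact Finsupp.sum_congr fun i _ => auxEquiv_symm_single i _
  rw [hxe]
  refine Submodule.sum_mem _ fun i _ =>
    ⟨(⟨e x i, hinv i⟩ : ρ.invariants) ⊗ₜ[k] (Module.Basis.ofVectorSpace k W i), by simp⟩

lemma comm_lTensor {W' : Type*} [AddCommGroup W'] [Module k W'] (f : W' →ₗ[k] W)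
    (z : V ⊗[k] W') :
    TensorProduct.comm k V W (f.lTensor V z) = f.rTensor V (TensorProduct.comm k V W' z) := by
  induction z using TensorProduct.induction_on with
  | zero => simp
  | tmul v w => simp
  | add a b ha hb => simp [ha, hb]

lemma mem_range_lTensor {H : Type*} [Group H] (ρ : Representation k H W) (x : V ⊗[k] W)
    (hx : ∀ h, (ρ h).lTensor V x = x) :
    x ∈ LinearMap.range (ρ.invariants.subtype.lTensor V) := by
  have hx' : ∀ h, (ρ h).rTensor V (TensorProduct.comm k V W x) = TensorProduct.comm k V W x := by
    intro h; rw [← comm_lTensor, hx]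
  obtain ⟨y, hy⟩ := mem_range_rTensor ρ _ hx'
  refine ⟨(TensorProduct.comm k V _).symm y, ?_⟩
  apply (TensorProduct.comm k V W).injective
  rw [comm_lTensor, LinearEquiv.apply_symm_apply, hy]

end Aux

/-- Let `k` be a field, `G` and `H` groups, `V` a `k`-linear representation of `G` and `W` a
`k`-linear representation of `H`.  The canonical `k`-linear map
`V^G ⊗[k] W^H → (V ⊗[k] W)^{G×H}` induced by the inclusions of the invariant subspaces
(where `G × H` acts on `V ⊗ W` by `(g,h)·(v⊗w) = (g·v)⊗(h·w)`) is an isomorphism: the map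
`V^G ⊗ W^H → V ⊗ W` is injective, and its range is exactly the `(G×H)`-invariants. -/
theorem invariants_tprod_iso (k : Type*) [Field k] (G H : Type*) [Group G] [Group H]
    (V W : Type*) [AddCommGroup V] [Module k V] [AddCommGroup W] [Module k W]
    (ρV : Representation k G V) (ρW : Representation k H W) :
    Function.Injective
        (TensorProduct.map ρV.invariants.subtype ρW.invariants.subtype) ∧
      LinearMap.range (TensorProduct.map ρV.invariants.subtype ρW.invariants.subtype) =
        (Representation.tprod (ρV.comp (MonoidHom.fst G H))
          (ρW.comp (MonoidHom.snd G H))).invariants := by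
  have hdecomp : TensorProduct.map ρV.invariants.subtype ρW.invariants.subtype =
      (ρV.invariants.subtype.rTensor W).comp (ρW.invariants.subtype.lTensor ρV.invariants) :=
    by rw [LinearMap.rTensor_comp_lTensor]
  have hrinj : Function.Injective (ρV.invariants.subtype.rTensor W) :=
    Module.Flat.rTensor_preserves_injective_linearMap _ ρV.invariants.injective_subtype
  have hlinj : Function.Injective (ρW.invariants.subtype.lTensor ρV.invariants) :=
    Module.Flat.lTensor_preserves_injective_linearMap _ ρW.invariants.injective_subtype
  constructor
  · rw [hdecomp]; exact hrinj.comp hlinj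
  · ext x
    simp only [Representation.mem_invariants]
    constructor
    · rintro ⟨z, rfl⟩ ⟨g, h⟩
      have e1 : (ρV g) ∘ₗ ρV.invariants.subtype = ρV.invariants.subtype :=
        LinearMap.ext fun v => v.2 g
      have e2 : (ρW h) ∘ₗ ρW.invariants.subtype = ρW.invariants.subtype :=
        LinearMap.ext fun w => w.2 h
      rw [Representation.tprod_apply, ← LinearMap.comp_apply, ← TensorProduct.map_comp]
      simp [e1, e2]
    · intro hx
      have h1 : ∀ g, (ρV g).rTensor W x = x := by
        intro g
        simpa [Representation.tprod_apply, LinearMap.rTensor, Module.End.one_eq_id]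
          using hx (g, 1)
      obtain ⟨y, hy⟩ := mem_range_rTensor ρV x h1
      have hxl : ∀ h, (ρW h).lTensor V x = x := by
        intro h
        simpa [Representation.tprod_apply, LinearMap.lTensor, Module.End.one_eq_id]
          using hx (1, h)
      have h2 : ∀ h, (ρW h).lTensor ρV.invariants y = y := by
        intro h
        apply hrinj
        have h2' : (ρV.invariants.subtype.rTensor W) ((ρW h).lTensor ρV.invariants y) =
            (ρW h).lTensor V ((ρV.invariants.subtype.rTensor W) y) := by
          rw [← LinearMap.comp_apply, ← LinearMap.comp_apply,
            LinearMap.rTensor_comp_lTensor, LinearMap.lTensor_comp_rTensor]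
        rw [h2', hy, hxl h]
      obtain ⟨z, hz⟩ := mem_range_lTensor ρW y h2
      exact ⟨z, by rw [hdecomp, LinearMap.comp_apply, hz, hy]⟩
end
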